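/- arXiv:1208.0396 — 2 statements merged into one kernel-verified Lean document; each statement's English description precedes it below -/
import Mathlib

section
/- Let A and B be lists over a type α with decidable equality, of lengths m and n respectively, and let k satisfy 0 ≤ k ≤ m. In the LCS grid graph G_{A++A, B} built from the doubled string A ++ A (of length 2m) and B, the minimum length of a directed path from (k,0) to (m+k, n) equals m + n − lcsLen(cut(A,k), B). -/
/-- `lcsLen s t` is the maximum length of a list that is a sublist
(subsequence) of both `s` and `t`. -/
def lcsLen {α : Type*} [DecidableEq α] (s t : List α) : ℕ :=
  ((s.sublists.filter (fun l => decide (l.Sublist t))).map List.length).foldr max 0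

/-- Edge relation of the LCS grid graph `G_{C,B}`: horizontal, vertical,
and (on character matches) diagonal edges. -/
def GridEdge {α : Type*} (C B : List α) (u v : ℕ × ℕ) : Prop :=
  (v = (u.1, u.2 + 1) ∧ u.1 ≤ C.length ∧ u.2 < B.length) ∨
  (v = (u.1 + 1, u.2) ∧ u.1 < C.length ∧ u.2 ≤ B.length) ∨
  (v = (u.1 + 1, u.2 + 1) ∧
    ∃ (h1 : u.1 < C.length) (h2 : u.2 < B.length), C.get ⟨u.1, h1⟩ = B.get ⟨u.2, h2⟩)

/-- `IsGridPath C B ℓ u v p` : `p` is a directed path of length `ℓ`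
from `u` to `v` in the LCS grid graph `G_{C,B}`. -/
def IsGridPath {α : Type*} (C B : List α) (ℓ : ℕ) (u v : ℕ × ℕ)
    (p : Fin (ℓ + 1) → ℕ × ℕ) : Prop :=
  p 0 = u ∧ p (Fin.last ℓ) = v ∧
    ∀ k : Fin ℓ, GridEdge C B (p k.castSucc) (p k.succ)

section Aux

lemma mem_le_foldr_max (a : ℕ) (l : List ℕ) (h : a ∈ l) : a ≤ l.foldr max 0 := by
  induction l with
  | nil => simp at h
  | cons b l ih =>
    rcases List.mem_cons.1 h with rfl | h
    · exact le_max_left _ _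
    · exact le_trans (ih h) (le_max_right _ _)

lemma foldr_max_attained (l : List ℕ) : l.foldr max 0 = 0 ∨ l.foldr max 0 ∈ l := by
  induction l with
  | nil => simp
  | cons b l ih =>
    simp only [List.foldr_cons]
    rcases le_total b (l.foldr max 0) with h | h
    · rw [max_eq_right h]
      rcases ih with h0 | hm
      · exact .inl h0
      · exact .inr (List.mem_cons_of_mem _ hm)
    · rw [max_eq_left h]
      exact .inr List.mem_cons_self

lemma length_le_lcsLen {α : Type*} [DecidableEq α] {w s t : List α}
    (hs : w.Sublist s) (ht : w.Sublist t) : w.length ≤ lcsLen s t := by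
  apply mem_le_foldr_max
  apply List.mem_map_of_mem
  rw [List.mem_filter]
  exact ⟨List.mem_sublists.2 hs, by simpa using ht⟩

lemma exists_lcs {α : Type*} [DecidableEq α] (s t : List α) :
    ∃ w : List α, w.Sublist s ∧ w.Sublist t ∧ w.length = lcsLen s t := by
  have := foldr_max_attained (((s.sublists.filter (fun l => decide (l.Sublist t))).map List.length))
  rcases this with h0 | hm
  · exact ⟨[], List.nil_sublist _, List.nil_sublist _, by simp [lcsLen, h0]⟩
  · rcases List.mem_map.1 hm with ⟨w, hw, hlen⟩
    rw [List.mem_filter] at hw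
    exact ⟨w, List.mem_sublists.1 hw.1, by simpa using hw.2, hlen⟩

lemma getLast?_cons_ne {β : Type*} (x : β) (l : List β) (h : l ≠ []) :
    (x :: l).getLast? = l.getLast? := by
  cases l with
  | nil => simp at h
  | cons a l => simp [List.getLast?]

lemma shift_idx {β : Type*} (L : List β) (i : ℕ) (t t' : List β)
    (hB : ∀ b, b < t.length → L[i+b]? = t[b]?) (c : β) (ht : t = c :: t') :
    ∀ b, b < t'.length → L[(i+1)+b]? = t'[b]? := by
  subst ht
  intro b hb
  have := hB (b+1) (by simp; omega)
  rw [List.getElem?_cons_succ] at this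
  rwa [show i+(b+1) = i+1+b by omega] at this

lemma ex_chain {α : Type*} (C B : List α) : ∀ (N : ℕ) (s t w : List α),
    s.length + t.length ≤ N → w.Sublist s → w.Sublist t →
    ∀ i j : ℕ, i + s.length ≤ C.length → j + t.length ≤ B.length →
    (∀ a, a < s.length → C[i+a]? = s[a]?) →
    (∀ b, b < t.length → B[j+b]? = t[b]?) →
    ∃ l : List (ℕ × ℕ), List.IsChain (GridEdge C B) l ∧ l.head? = some (i, j) ∧
      l.getLast? = some (i + s.length, j + t.length) ∧
      l.length = s.length + t.length - w.length + 1 := by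
  intro N
  induction N with
  | zero =>
    intro s t w hN hws hwt i j hi hj hC hB
    have hs : s = [] := List.length_eq_zero_iff.1 (by omega)
    have ht : t = [] := List.length_eq_zero_iff.1 (by omega)
    subst hs; subst ht
    have hw : w = [] := List.sublist_nil.1 hws
    subst hw
    exact ⟨[(i, j)], by simp, by simp, by simp, by simp⟩
  | succ N ih =>
    intro s t w hN hws hwt i j hi hj hC hB
    cases s with
    | nil =>
      have hw : w = [] := List.sublist_nil.1 hws
      subst hw
      cases t with
      | nil => exact ⟨[(i, j)], by simp, by simp, by simp, by simp⟩
      | cons c t' =>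
        obtain ⟨l, hl, hh, hlast, hlen⟩ := ih [] t' [] (by simp at hN ⊢; omega)
          (List.nil_sublist _) (List.nil_sublist _) i (j+1)
          (by simpa using hi) (by simp at hj ⊢; omega) (by simp)
          (shift_idx B j (c::t') t' hB c rfl)
        refine ⟨(i, j) :: l, ?_, by simp, ?_, ?_⟩
        · rw [List.isChain_cons]
          refine ⟨?_, hl⟩
          intro y hy
          rw [hh] at hy; simp at hy; subst hy
          left
          exact ⟨rfl, by simpa using hi, by simp at hj; omega⟩
        · rw [getLast?_cons_ne _ _ (by rintro rfl; simp at hh)]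
          rw [hlast]; simp; omega
        · simp at hlen ⊢; omega
    | cons a s' =>
      cases hws with
      | cons _ hws' =>
        -- vertical step
        obtain ⟨l, hl, hh, hlast, hlen⟩ := ih s' t w (by simp at hN; omega)
          hws' hwt (i+1) j (by simp at hi ⊢; omega) hj
          (shift_idx C i (a::s') s' hC a rfl) hB
        refine ⟨(i, j) :: l, ?_, by simp, ?_, ?_⟩
        · rw [List.isChain_cons]
          refine ⟨?_, hl⟩
          intro y hy
          rw [hh] at hy; simp at hy; subst hy
          right; left
          exact ⟨rfl, by simp at hi; omega, by omega⟩
        · rw [getLast?_cons_ne _ _ (by rintro rfl; simp at hh)]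
          rw [hlast]; simp; omega
        · have hwle : w.length ≤ s'.length := hws'.length_le
          simp at hlen ⊢; omega
      | cons_cons _ hws' =>
        rename_i w''
        cases t with
        | nil => exact absurd hwt (by simp)
        | cons c t' =>
          cases hwt with
          | cons _ hwt' =>
            -- horizontal step
            obtain ⟨l, hl, hh, hlast, hlen⟩ := ih (a :: s') t' (a :: w'')
              (by simp at hN ⊢; omega) (hws'.cons_cons a) hwt' i (j+1)
              hi (by simp at hj ⊢; omega) hC
              (shift_idx B j (c::t') t' hB c rfl)
            refine ⟨(i, j) :: l, ?_, by simp, ?_, ?_⟩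
            · rw [List.isChain_cons]
              refine ⟨?_, hl⟩
              intro y hy
              rw [hh] at hy; simp at hy; subst hy
              left
              exact ⟨rfl, by simp at hi; omega, by simp at hj; omega⟩
            · rw [getLast?_cons_ne _ _ (by rintro rfl; simp at hh)]
              rw [hlast]; simp; omega
            · have : w''.length ≤ s'.length := hws'.length_le
              simp at hlen ⊢; omega
          | cons_cons _ hwt' =>
            -- diagonal step, c = a
            obtain ⟨l, hl, hh, hlast, hlen⟩ := ih s' t' w''
              (by simp at hN ⊢; omega) hws' hwt' (i+1) (j+1)
              (by simp at hi ⊢; omega) (by simp at hj ⊢; omega)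
              (shift_idx C i (a::s') s' hC a rfl)
              (shift_idx B j (a::t') t' hB a rfl)
            refine ⟨(i, j) :: l, ?_, by simp, ?_, ?_⟩
            · rw [List.isChain_cons]
              refine ⟨?_, hl⟩
              intro y hy
              rw [hh] at hy; simp at hy; subst hy
              right; right
              have h1 : i < C.length := by simp at hi; omega
              have h2 : j < B.length := by simp at hj; omega
              have hca : C[i] = a := by
                have h := hC 0 (by simp)
                rw [Nat.add_zero, List.getElem?_eq_getElem h1] at h
                simpa using h
              have hcb : B[j] = a := by
                have h := hB 0 (by simp)
                rw [Nat.add_zero, List.getElem?_eq_getElem h2] at h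
                simpa using h
              exact ⟨rfl, h1, h2, by simp [List.get_eq_getElem, hca, hcb]⟩
            · rw [getLast?_cons_ne _ _ (by rintro rfl; simp at hh)]
              rw [hlast]; simp; omega
            · have hwle : w''.length ≤ s'.length := hws'.length_le
              simp at hlen ⊢; omega

lemma seg_widen {β : Type*} (L : List β) (i n : ℕ) {w : List β}
    (hw : w.Sublist ((L.drop (i+1)).take (n - (i+1)))) :
    w.Sublist ((L.drop i).take (n - i)) := by
  rcases lt_or_ge i L.length with hi | hi
  · rw [List.drop_eq_getElem_cons hi]
    rcases Nat.eq_zero_or_pos (n - i) with h0 | hpos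
    · rw [show n - (i+1) = 0 by omega] at hw
      simp at hw
      simp [h0, hw]
    · rw [show n - i = (n - (i+1)) + 1 by omega, List.take_succ_cons]
      exact hw.cons _
  · rw [List.drop_eq_nil_of_le (by omega)] at hw ⊢
    simpa using hw

lemma seg_cons {β : Type*} (L : List β) (i n : ℕ) {w : List β}
    (hi : i < L.length) (hn : i < n)
    (hw : w.Sublist ((L.drop (i+1)).take (n - (i+1)))) :
    (L[i] :: w).Sublist ((L.drop i).take (n - i)) := by
  rw [List.drop_eq_getElem_cons hi, show n - i = (n - (i+1)) + 1 by omega,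
    List.take_succ_cons]
  exact hw.cons₂ _

lemma lb_aux {α : Type*} (C B : List α) : ∀ (ℓ : ℕ) (u v : ℕ × ℕ)
    (p : Fin (ℓ + 1) → ℕ × ℕ), IsGridPath C B ℓ u v p →
    ∃ w : List α, w.Sublist ((C.drop u.1).take (v.1 - u.1)) ∧
      w.Sublist ((B.drop u.2).take (v.2 - u.2)) ∧
      (v.1 - u.1) + (v.2 - u.2) ≤ ℓ + w.length := by
  intro ℓ
  induction ℓ with
  | zero =>
    intro u v p hp
    obtain ⟨h0, hlast, _⟩ := hp
    have : u = v := by rw [← h0, ← hlast]; rfl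
    subst this
    exact ⟨[], by simp, by simp, by simp⟩
  | succ ℓ ih =>
    intro u v p hp
    obtain ⟨h0, hlast, hedge⟩ := hp
    set u' := p 1 with hu'
    have hq : IsGridPath C B ℓ u' v (fun k => p k.succ) := by
      refine ⟨rfl, ?_, ?_⟩
      · rw [← hlast]; congr 1
      · intro k
        have := hedge k.succ
        rwa [← Fin.succ_castSucc] at this
    have hfirst : GridEdge C B u u' := by
      have := hedge 0
      rwa [show (0 : Fin (ℓ+1)).castSucc = 0 from rfl, h0] at this
    obtain ⟨w, hw1, hw2, hlen⟩ := ih u' v _ hq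
    rcases hfirst with ⟨heq, hle, hlt⟩ | ⟨heq, hlt, hle⟩ | ⟨heq, h1, h2, hmatch⟩
    · -- horizontal
      rw [heq] at hw1 hw2 hlen
      exact ⟨w, hw1, seg_widen B u.2 v.2 hw2, by omega⟩
    · -- vertical
      rw [heq] at hw1 hw2 hlen
      exact ⟨w, seg_widen C u.1 v.1 hw1, hw2, by omega⟩
    · -- diagonal
      rw [heq] at hw1 hw2 hlen
      simp only at hw1 hw2 hlen
      rcases le_or_gt v.1 u.1 with hv1 | hv1
      · rw [show v.1 - (u.1+1) = 0 by omega] at hw1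
        simp at hw1
        subst hw1
        refine ⟨[], by simp, by simp, by simp at hlen ⊢; omega⟩
      · rcases le_or_gt v.2 u.2 with hv2 | hv2
        · rw [show v.2 - (u.2+1) = 0 by omega] at hw2
          simp at hw2
          subst hw2
          refine ⟨[], by simp, by simp, by simp at hlen ⊢; omega⟩
        · refine ⟨C[u.1] :: w, seg_cons C u.1 v.1 h1 hv1 hw1, ?_, by simp; omega⟩
          have : C[u.1] = B[u.2] := hmatch
          rw [this]
          exact seg_cons B u.2 v.2 h2 hv2 hw2

lemma path_of_chain {α : Type*} (C B : List α) (ℓ : ℕ) (u v : ℕ × ℕ)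
    (l : List (ℕ × ℕ)) (hc : List.IsChain (GridEdge C B) l)
    (hh : l.head? = some u) (hl : l.getLast? = some v) (hlen : l.length = ℓ + 1) :
    ∃ p : Fin (ℓ + 1) → ℕ × ℕ, IsGridPath C B ℓ u v p := by
  refine ⟨fun k => l.get (Fin.cast hlen.symm k), ?_, ?_, ?_⟩
  · rw [List.head?_eq_getElem?, List.getElem?_eq_getElem (by omega)] at hh
    simpa [List.get_eq_getElem] using (Option.some.inj hh)
  · rw [List.getLast?_eq_getElem?, List.getElem?_eq_getElem (by omega)] at hl
    have := Option.some.inj hl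
    simpa [List.get_eq_getElem, hlen, Fin.last] using this
  · intro k
    have := List.isChain_iff_getElem.1 hc k (by omega)
    convert this using 2 <;> rfl

lemma rotate_getElem? {α : Type*} (A : List α) (k : ℕ) (hk : k ≤ A.length) :
    ∀ a, a < A.length → (A ++ A)[k + a]? = (A.rotate k)[a]? := by
  intro a ha
  rw [List.rotate_eq_drop_append_take hk]
  rcases lt_or_ge (k + a) A.length with h | h
  · rw [List.getElem?_append, if_pos h, List.getElem?_append,
      if_pos (by simp; omega), List.getElem?_drop]
  · rw [List.getElem?_append_right (by omega), List.getElem?_append_right (by simp; omega)]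
    rw [List.getElem?_take, if_pos (by simp at *; omega)]
    congr 1
    simp
    omega

lemma rotate_eq_seg {α : Type*} (A : List α) (k : ℕ) (hk : k ≤ A.length) :
    ((A ++ A).drop k).take A.length = A.rotate k := by
  apply List.ext_getElem?
  intro a
  rcases lt_or_ge a A.length with ha | ha
  · rw [List.getElem?_take, if_pos ha, List.getElem?_drop, rotate_getElem? A k hk a ha]
  · rw [List.getElem?_take, if_neg (by omega), eq_comm, List.getElem?_eq_none]
    simpa using ha

end Aux

/-- In the grid graph of the doubled string `A ++ A` against `B`, the minimum
length of a directed path from `(k,0)` to `(m+k,n)` equals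
`m + n - lcsLen (A.rotate k) B`. -/
theorem shortest_path_in_doubled_grid {α : Type*} [DecidableEq α]
    (A B : List α) (k : ℕ) (hk : k ≤ A.length) :
    IsLeast {ℓ : ℕ | ∃ p : Fin (ℓ + 1) → ℕ × ℕ,
        IsGridPath (A ++ A) B ℓ (k, 0) (A.length + k, B.length) p}
      (A.length + B.length - lcsLen (A.rotate k) B) := by
  set m := A.length with hm
  set n := B.length with hn
  set L := lcsLen (A.rotate k) B with hL
  constructor
  · -- membership
    obtain ⟨w, hws, hwt, hwlen⟩ := exists_lcs (A.rotate k) B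
    have hLle : L ≤ m := by
      rw [hL, ← hwlen]
      have := hws.length_le
      simpa [hm] using this
    obtain ⟨l, hc, hh, hlast, hlen⟩ := ex_chain (A ++ A) B
      ((A.rotate k).length + B.length) (A.rotate k) B w le_rfl hws hwt k 0
      (by simp [List.length_rotate]; omega) (by simp)
      (by simpa [List.length_rotate] using rotate_getElem? A k hk)
      (by simp)
    rw [List.length_rotate] at hlast hlen
    rw [hwlen, ← hL] at hlen
    obtain ⟨p, hp⟩ := path_of_chain (A ++ A) B (m + n - L) (k, 0) (m + k, n) l hc hh
      (by rw [hlast, Nat.zero_add, Nat.add_comm]) (by rw [hlen])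
    exact ⟨p, by rwa [show m + k = A.length + k from rfl, Nat.add_comm m k] at hp ⊢⟩
  · -- lower bound
    rintro ℓ ⟨p, hp⟩
    obtain ⟨w, hw1, hw2, hle⟩ := lb_aux (A ++ A) B ℓ (k, 0) (A.length + k, B.length) p hp
    simp only [show (A.length + k, B.length).1 = A.length + k from rfl,
      show ((k : ℕ), (0 : ℕ)).1 = k from rfl] at hw1 hw2 hle
    rw [show A.length + k - k = A.length by omega] at hw1 hle
    rw [rotate_eq_seg A k hk] at hw1
    simp only [Nat.sub_zero, List.drop_zero, List.take_length] at hw2 hle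
    have hwL : w.length ≤ L := length_le_lcsLen hw1 hw2
    omega
end

section
/- Let A and B be lists over a type α with decidable equality, with A nonempty. For every natural number k, the longest-common-subsequence lengths for consecutive cyclic cuts of A differ by at most one: lcsLen(cut(A,k), B) ≤ lcsLen(cut(A,k+1), B) + 1 and lcsLen(cut(A,k+1), B) ≤ lcsLen(cut(A,k), B) + 1. -/
lemma le_foldr_max (x : ℕ) (L : List ℕ) (hx : x ∈ L) : x ≤ L.foldr max 0 := by
  induction L with
  | nil => simp at hx
  | cons a l ih =>
    rcases List.mem_cons.1 hx with h | h
    · subst h; exact le_max_left _ _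
    · exact le_trans (ih h) (le_max_right _ _)

lemma foldr_max_mem (L : List ℕ) : L.foldr max 0 = 0 ∨ L.foldr max 0 ∈ L := by
  induction L with
  | nil => left; rfl
  | cons a l ih =>
    rcases Nat.le_total a (l.foldr max 0) with hle | hle
    · rcases ih with h | h
      · left; rw [List.foldr, max_eq_right hle, h]
      · right; exact List.mem_cons_of_mem _ (by rwa [List.foldr, max_eq_right hle])
    · right
      rw [List.foldr, max_eq_left hle]
      exact List.mem_cons_self

lemma le_lcsLen {α : Type*} [DecidableEq α] (c s t : List α)
    (hs : c.Sublist s) (ht : c.Sublist t) : c.length ≤ lcsLen s t := by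
  apply le_foldr_max
  apply List.mem_map_of_mem
  rw [List.mem_filter]
  exact ⟨List.mem_sublists.2 hs, by simpa using ht⟩

lemma lcsLen_exists {α : Type*} [DecidableEq α] (s t : List α) :
    ∃ c : List α, c.Sublist s ∧ c.Sublist t ∧ lcsLen s t ≤ c.length := by
  rcases foldr_max_mem (((s.sublists.filter (fun l : List α => decide (l.Sublist t))).map List.length)) with h | h
  · exact ⟨[], List.nil_sublist s, List.nil_sublist t, by simp [lcsLen, h]⟩
  · rcases List.mem_map.1 h with ⟨c, hc, hlen⟩
    rw [List.mem_filter] at hc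
    exact ⟨c, List.mem_sublists.1 hc.1, by simpa using hc.2, by simp [lcsLen, hlen]⟩

lemma tail_sublist_of_cons {α : Type*} {c s : List α} {a : α}
    (h : c.Sublist (a :: s)) : c.tail.Sublist s := by
  cases h with
  | cons _ h' => exact (List.tail_sublist c).trans h'
  | cons_cons _ h' => exact h'

lemma step_lemma {α : Type*} [DecidableEq α] (a : α) (s B : List α) :
    lcsLen (a :: s) B ≤ lcsLen (s ++ [a]) B + 1 ∧
      lcsLen (s ++ [a]) B ≤ lcsLen (a :: s) B + 1 := by
  constructor
  · obtain ⟨c, hcs, hcB, hlen⟩ := lcsLen_exists (a :: s) B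
    have h1 : c.tail.Sublist (s ++ [a]) :=
      (tail_sublist_of_cons hcs).trans (List.sublist_append_left s [a])
    have h2 : c.tail.Sublist B := (List.tail_sublist c).trans hcB
    have h3 := le_lcsLen c.tail (s ++ [a]) B h1 h2
    have h4 : c.length ≤ c.tail.length + 1 := by
      cases c <;> simp
    omega
  · obtain ⟨c, hcs, hcB, hlen⟩ := lcsLen_exists (s ++ [a]) B
    have hrev : c.reverse.Sublist (a :: s.reverse) := by
      have := hcs.reverse
      simpa using this
    have h1 : c.reverse.tail.Sublist s.reverse := tail_sublist_of_cons hrev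
    have h1' : c.reverse.tail.reverse.Sublist s := by
      have := h1.reverse
      simpa using this
    have h2 : c.reverse.tail.reverse.Sublist B := by
      refine List.Sublist.trans ?_ hcB
      have := (List.tail_sublist c.reverse).reverse
      simpa using this
    have h3 := le_lcsLen c.reverse.tail.reverse (a :: s) B (h1'.cons a) h2
    have h4 : c.length ≤ c.reverse.tail.reverse.length + 1 := by
      simp [List.length_tail]
      omega
    omega

/-- The LCS lengths for consecutive cyclic cuts of `A` differ by at most one. -/
theorem lcsLen_rotate_step {α : Type*} [DecidableEq α]
    (A B : List α) (hA : A ≠ []) (k : ℕ) :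
    lcsLen (A.rotate k) B ≤ lcsLen (A.rotate (k + 1)) B + 1 ∧
      lcsLen (A.rotate (k + 1)) B ≤ lcsLen (A.rotate k) B + 1 := by
  have hl : A.rotate k ≠ [] := by
    intro h
    apply hA
    have := congrArg List.length h
    simpa using List.length_eq_zero_iff.1 (by simpa using this)
  obtain ⟨a, s, hs⟩ := List.exists_cons_of_ne_nil hl
  have hrot : A.rotate (k + 1) = s ++ [a] := by
    rw [show k + 1 = k + 1 from rfl, ← List.rotate_rotate, hs]
    simpa using List.rotate_cons_succ s a 0
  rw [hs, hrot]
  exact step_lemma a s B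
end
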